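/- Let μ > 0 be non-integer, m = ⌈μ⌉, ν = m - μ, f defined on ℕ_a with a ∈ ℤ⁺. Then for all t ∈ ℕ_{a+ν}: Δ^μ f(t) = Δ_*^μ f(t) + ∑_{k=0}^{m-1} ((t-a)^(ν-m+k)/Γ(ν+k-m+1))·Δ^k f(a), where Δ^μ f(t) = Δ^m(Δ^{-ν} f(t)) is the Riemann–Liouville fractional difference and Δ_*^μ f(t) = Δ^{-ν}(Δ^m f(t)) is the Caputo-like fractional difference. -/

import Mathlib

open Finset

/-- Generalized falling factorial `t^(α) = Γ(t+1)/Γ(t-α+1)`. -/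
noncomputable def gff (t α : ℝ) : ℝ := Real.Gamma (t + 1) / Real.Gamma (t - α + 1)

/-- Forward difference operator `Δf(t) = f(t+1) - f(t)`. -/
def fdiff (f : ℝ → ℝ) : ℝ → ℝ := fun t => f (t + 1) - f t

/-- The ν-th fractional sum with base point `a`:
`Δ^{-ν} f(t) = (1/Γ(ν)) ∑_{s=a}^{t-ν} (t-s-1)^(ν-1) f(s)`, the sum running over
`s = a, a+1, ..., t-ν` (for `t ∈ ℕ_{a+ν}`, there are `t-ν-a+1` terms). -/
noncomputable def fsum (ν a : ℝ) (f : ℝ → ℝ) (t : ℝ) : ℝ :=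
  (1 / Real.Gamma ν) *
    ∑ j ∈ Finset.range ((⌊t - ν - a⌋).toNat + 1),
      gff (t - (a + j) - 1) (ν - 1) * f (a + j)

/-- The Caputo-like fractional difference `Δ_*^μ f = Δ^{-(⌈μ⌉-μ)} (Δ^{⌈μ⌉} f)`. -/
noncomputable def caputo (μ a : ℝ) (f : ℝ → ℝ) : ℝ → ℝ :=
  fsum ((⌈μ⌉₊ : ℝ) - μ) a (fdiff^[⌈μ⌉₊] f)

/- ### Auxiliary lemmas -/

lemma fdiff_iter_add : ∀ (k : ℕ) (F G : ℝ → ℝ) (t : ℝ),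
    fdiff^[k] (fun s => F s + G s) t = fdiff^[k] F t + fdiff^[k] G t := by
  intro k
  induction k with
  | zero => intro F G t; simp
  | succ k ih =>
    intro F G t
    rw [Function.iterate_succ_apply, Function.iterate_succ_apply (f := fdiff) (n := k) F,
        Function.iterate_succ_apply (f := fdiff) (n := k) G]
    rw [show fdiff (fun s => F s + G s) = fun s => fdiff F s + fdiff G s from by
      funext s; simp [fdiff]; ring]
    exact ih _ _ _

lemma fdiff_iter_mulr : ∀ (k : ℕ) (F : ℝ → ℝ) (c : ℝ) (t : ℝ),
    fdiff^[k] (fun s => F s * c) t = fdiff^[k] F t * c := by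
  intro k
  induction k with
  | zero => intro F c t; simp
  | succ k ih =>
    intro F c t
    rw [Function.iterate_succ_apply, Function.iterate_succ_apply (f := fdiff) (n := k) F]
    rw [show fdiff (fun s => F s * c) = fun s => fdiff F s * c from by
      funext s; simp [fdiff]; ring]
    exact ih _ _ _

lemma fdiff_iter_congr (F G : ℝ → ℝ) (a ν : ℝ)
    (h : ∀ p : ℕ, F (a + ν + p) = G (a + ν + p)) :
    ∀ (k n : ℕ), fdiff^[k] F (a + ν + n) = fdiff^[k] G (a + ν + n) := by
  intro k
  induction k with
  | zero => intro n; exact h n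
  | succ k ih =>
    intro n
    rw [Function.iterate_succ_apply' (f := fdiff) (n := k) F,
        Function.iterate_succ_apply' (f := fdiff) (n := k) G]
    simp only [fdiff]
    rw [show a + ν + (n:ℝ) + 1 = a + ν + ((n+1 : ℕ):ℝ) by push_cast; ring]
    rw [ih (n+1), ih n]

lemma fdiff_gff (a α t : ℝ) (h1 : t - a + 1 ≠ 0) (h2 : t - a - α + 1 ≠ 0)
    (h3 : Real.Gamma (t - a - α + 1) ≠ 0) :
    fdiff (fun s => gff (s - a) α) t = α * gff (t - a) (α - 1) := by
  simp only [fdiff, gff]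
  rw [show t + 1 - a + 1 = (t - a + 1) + 1 by ring,
      show t + 1 - a - α + 1 = (t - a - α + 1) + 1 by ring,
      show t - a - (α - 1) + 1 = (t - a - α + 1) + 1 by ring,
      Real.Gamma_add_one h1, Real.Gamma_add_one h2]
  field_simp
  ring

lemma gff_iter (a ν : ℝ) (hν : 0 < ν) :
    ∀ (k j n : ℕ), fdiff^[k] (fun t => gff (t - a) (ν - 1 - j)) (a + ν + n)
      = (∏ i ∈ Finset.range k, (ν - 1 - j - i)) * gff (ν + n) (ν - 1 - j - k) := by
  intro k
  induction k with
  | zero =>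
    intro j n
    simp only [Function.iterate_zero, id_eq, Finset.range_zero, Finset.prod_empty, one_mul,
      Nat.cast_zero, sub_zero]
    rw [show a + ν + (n:ℝ) - a = ν + n by ring]
  | succ k ih =>
    intro j n
    rw [Function.iterate_succ_apply]
    have hgrid : ∀ p : ℕ, fdiff (fun t => gff (t - a) (ν - 1 - j)) (a + ν + p)
        = (fun t => gff (t - a) (ν - 1 - ((j+1 : ℕ):ℝ)) * (ν - 1 - (j:ℝ))) (a + ν + p) := by
      intro p
      have h1 : a + ν + (p:ℝ) - a + 1 ≠ 0 := by
        rw [show a + ν + (p:ℝ) - a + 1 = ν + p + 1 by ring]; positivity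
      have h2 : a + ν + (p:ℝ) - a - (ν - 1 - j) + 1 ≠ 0 := by
        rw [show a + ν + (p:ℝ) - a - (ν - 1 - j) + 1 = (p:ℝ) + j + 2 by ring]; positivity
      have h3 : Real.Gamma (a + ν + (p:ℝ) - a - (ν - 1 - j) + 1) ≠ 0 := by
        rw [show a + ν + (p:ℝ) - a - (ν - 1 - j) + 1 = (p:ℝ) + j + 2 by ring]
        exact (Real.Gamma_pos_of_pos (by positivity)).ne'
      rw [fdiff_gff a (ν - 1 - j) _ h1 h2 h3]
      simp only
      rw [show ν - 1 - (j:ℝ) - 1 = ν - 1 - ((j+1 : ℕ):ℝ) by push_cast; ring]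
      ring
    rw [fdiff_iter_congr _ (fun t => gff (t - a) (ν - 1 - ((j+1 : ℕ):ℝ)) * (ν - 1 - (j:ℝ)))
      a ν hgrid k n]
    rw [fdiff_iter_mulr]
    rw [ih (j+1) n]
    rw [Finset.prod_range_succ']
    rw [Finset.prod_congr rfl (fun i _ => show ν - 1 - (j:ℝ) - ((i+1 : ℕ):ℝ)
          = ν - 1 - ((j+1 : ℕ):ℝ) - (i:ℝ) by push_cast; ring)]
    rw [show ν - 1 - (j:ℝ) - ((k+1 : ℕ):ℝ) = ν - 1 - ((j+1 : ℕ):ℝ) - (k:ℝ) by push_cast; ring]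
    push_cast
    ring

lemma gamma_prod (ν : ℝ) (hνi : ∀ z : ℤ, ν ≠ z) :
    ∀ m : ℕ, Real.Gamma ν = (∏ i ∈ Finset.range m, (ν - 1 - i)) * Real.Gamma (ν - m) := by
  intro m
  induction m with
  | zero => simp
  | succ m ih =>
    have hne : ν - (m:ℝ) - 1 ≠ 0 := by
      intro h
      exact hνi ((m:ℤ) + 1) (by push_cast; linarith)
    rw [ih, Finset.prod_range_succ]
    rw [show Real.Gamma (ν - (m:ℝ)) = Real.Gamma ((ν - (m:ℝ) - 1) + 1) by ring_nf,
        Real.Gamma_add_one hne,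
        show ν - ((m+1:ℕ):ℝ) = ν - (m:ℝ) - 1 by push_cast; ring]
    push_cast
    ring

lemma gamma_ne (ν : ℝ) (hνi : ∀ z : ℤ, ν ≠ z) (m : ℕ) : Real.Gamma (ν - m) ≠ 0 := by
  apply Real.Gamma_ne_zero
  intro k h
  exact hνi ((m:ℤ) - (k:ℤ)) (by push_cast; linarith)

/-- The key `m = 1` summation-by-parts identity. -/
lemma lemA (ν a : ℝ) (f : ℝ → ℝ) (n : ℕ) :
    fdiff (fsum ν a f) (a + ν + n)
      = fsum ν a (fdiff f) (a + ν + n) + gff (ν + n) (ν - 1) / Real.Gamma ν * f a := by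
  have h1 : (⌊a + ν + (n:ℝ) - ν - a⌋).toNat = n := by
    rw [show a + ν + (n:ℝ) - ν - a = ((n:ℕ):ℝ) by push_cast; ring, Int.floor_natCast,
      Int.toNat_natCast]
  have h2 : (⌊a + ν + (n:ℝ) + 1 - ν - a⌋).toNat = n + 1 := by
    rw [show a + ν + (n:ℝ) + 1 - ν - a = ((n+1:ℕ):ℝ) by push_cast; ring, Int.floor_natCast,
      Int.toNat_natCast]
  simp only [fdiff, fsum, h1, h2]
  rw [Finset.sum_range_succ']
  have e1 : ∀ j ∈ Finset.range (n+1),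
      gff (a + ν + (n:ℝ) + 1 - (a + ((j+1:ℕ):ℝ)) - 1) (ν - 1) * f (a + ((j+1:ℕ):ℝ))
        = gff (a + ν + (n:ℝ) - (a + (j:ℝ)) - 1) (ν - 1) * (f (a + (j:ℝ) + 1) - f (a + (j:ℝ)))
          + gff (a + ν + (n:ℝ) - (a + (j:ℝ)) - 1) (ν - 1) * f (a + (j:ℝ)) := by
    intro j _
    rw [show a + ν + (n:ℝ) + 1 - (a + ((j+1:ℕ):ℝ)) - 1 = a + ν + (n:ℝ) - (a + (j:ℝ)) - 1 by
          push_cast; ring,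
        show a + ((j+1:ℕ):ℝ) = a + (j:ℝ) + 1 by push_cast; ring]
    ring
  rw [Finset.sum_congr rfl e1, Finset.sum_add_distrib]
  rw [show a + ν + (n:ℝ) + 1 - (a + ((0:ℕ):ℝ)) - 1 = ν + (n:ℝ) by push_cast; ring]
  simp only [Nat.cast_zero, add_zero]
  ring

/-- The main induction. -/
lemma key (ν a : ℝ) (hν : 0 < ν) (hνi : ∀ z : ℤ, ν ≠ z) :
    ∀ (m : ℕ) (f : ℝ → ℝ) (n : ℕ),
      fdiff^[m] (fsum ν a f) (a + ν + n)
        = fsum ν a (fdiff^[m] f) (a + ν + n)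
          + ∑ k ∈ Finset.range m,
              gff (ν + n) (ν - m + k) / Real.Gamma (ν + k - m + 1) * fdiff^[k] f a := by
  intro m
  induction m with
  | zero => intro f n; simp
  | succ m ih =>
    intro f n
    rw [Function.iterate_succ_apply]
    have hgrid : ∀ p : ℕ, fdiff (fsum ν a f) (a + ν + p)
        = (fun s => fsum ν a (fdiff f) s
            + gff (s - a) (ν - 1) * (f a / Real.Gamma ν)) (a + ν + p) := by
      intro p
      rw [lemA]
      simp only
      rw [show a + ν + (p:ℝ) - a = ν + p by ring]
      ring
    rw [fdiff_iter_congr _ (fun s => fsum ν a (fdiff f) s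
          + gff (s - a) (ν - 1) * (f a / Real.Gamma ν)) a ν hgrid m n]
    rw [fdiff_iter_add]
    rw [fdiff_iter_mulr m (fun t => gff (t - a) (ν - 1)) (f a / Real.Gamma ν)]
    have hg : fdiff^[m] (fun t => gff (t - a) (ν - 1)) (a + ν + n)
        = (∏ i ∈ Finset.range m, (ν - 1 - i)) * gff (ν + n) (ν - 1 - m) := by
      have := gff_iter a ν hν m 0 n
      simpa using this
    rw [hg, ih (fdiff f) n]
    rw [Finset.sum_range_succ' (fun k =>
      gff (ν + n) (ν - ((m+1:ℕ):ℝ) + k) / Real.Gamma (ν + k - ((m+1:ℕ):ℝ) + 1)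
        * fdiff^[k] f a) m]
    have e2 : ∀ k ∈ Finset.range m,
        gff (ν + n) (ν - ((m+1:ℕ):ℝ) + ((k+1:ℕ):ℝ)) / Real.Gamma (ν + ((k+1:ℕ):ℝ) - ((m+1:ℕ):ℝ) + 1)
          * fdiff^[k+1] f a
        = gff (ν + n) (ν - (m:ℝ) + (k:ℝ)) / Real.Gamma (ν + (k:ℝ) - (m:ℝ) + 1)
          * fdiff^[k] (fdiff f) a := by
      intro k _
      rw [show ν - ((m+1:ℕ):ℝ) + ((k+1:ℕ):ℝ) = ν - (m:ℝ) + (k:ℝ) by push_cast; ring,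
          show ν + ((k+1:ℕ):ℝ) - ((m+1:ℕ):ℝ) + 1 = ν + (k:ℝ) - (m:ℝ) + 1 by push_cast; ring,
          Function.iterate_succ_apply]
    rw [Finset.sum_congr rfl e2]
    have hsum : fsum ν a (fdiff^[m+1] f) = fsum ν a (fdiff^[m] (fdiff f)) := by
      rw [Function.iterate_succ_apply]
    rw [hsum]
    -- remaining: match the k = 0 term with the new gff term
    have hΓ : Real.Gamma ν = (∏ i ∈ Finset.range m, (ν - 1 - i)) * Real.Gamma (ν - m) :=
      gamma_prod ν hνi m
    have hΓν : Real.Gamma ν ≠ 0 := by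
      have := gamma_ne ν hνi 0; simpa using this
    have hΓνm : Real.Gamma (ν - m) ≠ 0 := gamma_ne ν hνi m
    have hcoef : (∏ i ∈ Finset.range m, (ν - 1 - i)) * gff (ν + n) (ν - 1 - m)
          * (f a / Real.Gamma ν)
        = gff (ν + n) (ν - ((m+1:ℕ):ℝ) + ((0:ℕ):ℝ))
            / Real.Gamma (ν + ((0:ℕ):ℝ) - ((m+1:ℕ):ℝ) + 1) * fdiff^[0] f a := by
      rw [show ν - ((m+1:ℕ):ℝ) + ((0:ℕ):ℝ) = ν - 1 - (m:ℝ) by push_cast; ring,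
          show ν + ((0:ℕ):ℝ) - ((m+1:ℕ):ℝ) + 1 = ν - (m:ℝ) by push_cast; ring]
      simp only [Function.iterate_zero, id_eq]
      rw [hΓ]
      have hprod : (∏ i ∈ Finset.range m, (ν - 1 - i)) ≠ 0 := by
        intro h
        rw [h, zero_mul] at hΓ
        exact hΓν hΓ
      field_simp
    rw [← hcoef]
    ring

theorem stmt8 (μ ν : ℝ) (hμ : 0 < μ) (hni : ∀ n : ℤ, μ ≠ n) (m : ℕ)
    (hm : m = ⌈μ⌉₊) (hν : ν = m - μ) (f : ℝ → ℝ) (a n : ℕ) (t : ℝ)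
    (ht : t = a + ν + n) :
    fdiff^[m] (fsum ν a f) t =
      caputo μ a f t +
        ∑ k ∈ Finset.range m,
          gff (t - a) (ν - m + k) / Real.Gamma (ν + k - m + 1) * fdiff^[k] f a := by
  have hνpos : 0 < ν := by
    rw [hν, hm]
    have h1 : μ ≤ (⌈μ⌉₊ : ℝ) := Nat.le_ceil μ
    have h2 : μ ≠ (⌈μ⌉₊ : ℝ) := by
      have := hni (⌈μ⌉₊ : ℤ)
      simpa using this
    cases lt_or_eq_of_le h1 with
    | inl h => linarith
    | inr h => exact absurd h h2
  have hνi : ∀ z : ℤ, ν ≠ z := by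
    intro z h
    rw [hν] at h
    exact hni ((m:ℤ) - z) (by push_cast; linarith)
  have hcap : caputo μ (a:ℝ) f t = fsum ν a (fdiff^[m] f) t := by
    rw [caputo, hν, hm]
  rw [hcap, ht]
  rw [show (a:ℝ) + ν + (n:ℝ) - (a:ℝ) = ν + (n:ℝ) by ring]
  exact key ν a hνpos hνi m f n
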